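/- (Theorem 1, characterization of the optimal multiplier.) Let K > 0, 0 ≤ t < T and S < λ m̄ (T-t). Then there exists a unique x* < 0 satisfying S = (T-t) H'(x*) + x*/(2K), and this x* is the unique maximizer over (-∞,0] of the function x ↦ S x - (T-t) H(x) - x²/(4K). -/

import Mathlib

open MeasureTheory Filter Set

/-- (Theorem 1, characterization of the optimal multiplier.) Let `K > 0`, `0 ≤ t < T` and
`S < λ m̄ (T-t)`. Then there is a unique `x* < 0` with `S = (T-t)H'(x*) + x*/(2K)`, and this
`x*` is the unique maximizer over `(-∞,0]` of `x ↦ S x - (T-t)H(x) - x²/(4K)`. -/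
theorem stmt_12 (f F G H H' : ℝ → ℝ) (mbar lam : ℝ)
    (hf_cont : Continuous f)
    (hf_nonpos : ∀ p ≤ (0 : ℝ), f p = 0)
    (hf_pos : ∀ p : ℝ, 0 < p → 0 < f p)
    (hf_int : (∫ p in Set.Ioi (0 : ℝ), f p) = 1)
    (hf_tail : Filter.Tendsto (fun p : ℝ => p ^ 3 * f p) Filter.atTop (nhds 0))
    (hmean_int : MeasureTheory.IntegrableOn (fun p : ℝ => p * f p) (Set.Ioi 0))
    (hmbar : mbar = ∫ p in Set.Ioi (0 : ℝ), p * f p)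
    (hF : ∀ b : ℝ, F b = ∫ p in (0 : ℝ)..b, f p)
    (hG : ∀ b : ℝ, G b = ∫ p in (0 : ℝ)..b, p * f p)
    (hlam : 0 < lam)
    (hHneg : ∀ x < (0 : ℝ), H x = -(lam * x) * ∫ p in (0 : ℝ)..(-1 / x), F p)
    (hHpos : ∀ x : ℝ, 0 ≤ x → H x = lam * (1 + x * mbar))
    (hH'deriv : ∀ x : ℝ, HasDerivAt H (H' x) x)
    (hH'neg : ∀ x < (0 : ℝ), H' x = lam * G (-1 / x))
    (hH'pos : ∀ x : ℝ, 0 ≤ x → H' x = lam * mbar)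
    (K t T S : ℝ) (hK : 0 < K) (ht : 0 ≤ t) (htT : t < T)
    (hS : S < lam * mbar * (T - t)) :
    ∃ xs : ℝ, xs < 0 ∧ S = (T - t) * H' xs + xs / (2 * K) ∧
      (∀ y : ℝ, y < 0 → S = (T - t) * H' y + y / (2 * K) → y = xs) ∧
      (∀ y ∈ Set.Iic (0 : ℝ),
        S * y - (T - t) * H y - y ^ 2 / (4 * K)
          ≤ S * xs - (T - t) * H xs - xs ^ 2 / (4 * K)) ∧
      (∀ y ∈ Set.Iic (0 : ℝ),
        S * y - (T - t) * H y - y ^ 2 / (4 * K)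
            = S * xs - (T - t) * H xs - xs ^ 2 / (4 * K) → y = xs) := by
  have hD : (0:ℝ) < T - t := sub_pos.2 htT
  have h2K : (0:ℝ) < 2 * K := by positivity
  set φ : ℝ → ℝ := fun x => (T - t) * H' x + x / (2 * K) with hφdef
  -- basic positivity
  have hfnn : ∀ p : ℝ, 0 ≤ f p := by
    intro p
    rcases le_or_gt p 0 with h | h
    · rw [hf_nonpos p h]
    · exact (hf_pos p h).le
  have hpf : ∀ p : ℝ, 0 ≤ p * f p := by
    intro p
    rcases le_or_gt p 0 with h | h
    · rw [hf_nonpos p h]; simp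
    · exact mul_nonneg h.le (hfnn p)
  have hcont_pf : Continuous fun p : ℝ => p * f p := continuous_id.mul hf_cont
  have hii : ∀ u v : ℝ, IntervalIntegrable (fun p => p * f p) volume u v :=
    fun u v => hcont_pf.intervalIntegrable u v
  -- G monotone
  have hGmono : ∀ a b : ℝ, a ≤ b → G a ≤ G b := by
    intro a b hab
    rw [hG a, hG b]
    have hadd := intervalIntegral.integral_add_adjacent_intervals (hii 0 a) (hii a b)
    have hnn : 0 ≤ ∫ p in a..b, p * f p :=
      intervalIntegral.integral_nonneg hab (fun p _ => hpf p)
    linarith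
  have hmbar_nn : 0 ≤ mbar := by
    rw [hmbar]; exact setIntegral_nonneg measurableSet_Ioi fun p _ => hpf p
  -- G ≤ mbar
  have hGle : ∀ b : ℝ, G b ≤ mbar := by
    intro b
    rcases le_or_gt b 0 with h | h
    · have h0 : G 0 = 0 := by rw [hG 0, intervalIntegral.integral_same]
      have := hGmono b 0 h
      linarith
    · rw [hG b, intervalIntegral.integral_of_le h.le, hmbar]
      refine setIntegral_mono_set hmean_int ?_ ?_
      · exact Eventually.of_forall fun p => hpf p
      · exact HasSubset.Subset.eventuallyLE Ioc_subset_Ioi_self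
  -- H' monotone on negatives
  have hH'mono : ∀ x y : ℝ, x ≤ y → y < 0 → H' x ≤ H' y := by
    intro x y hxy hy
    have hx : x < 0 := lt_of_le_of_lt hxy hy
    rw [hH'neg x hx, hH'neg y hy]
    have h1 : (1:ℝ)/y ≤ 1/x := one_div_le_one_div_of_neg_of_le hy hxy
    have h2 : -1/x ≤ -1/y := by
      rw [neg_div, neg_div]; linarith
    exact mul_le_mul_of_nonneg_left (hGmono _ _ h2) hlam.le
  have hH'le : ∀ x : ℝ, x < 0 → H' x ≤ lam * mbar := by
    intro x hx
    rw [hH'neg x hx]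
    exact mul_le_mul_of_nonneg_left (hGle _) hlam.le
  -- φ strictly monotone on negatives
  have hφmono : ∀ x y : ℝ, x < y → y < 0 → φ x < φ y := by
    intro x y hxy hy
    have h1 : (T - t) * H' x ≤ (T - t) * H' y :=
      mul_le_mul_of_nonneg_left (hH'mono x y hxy.le hy) hD.le
    have h2 : x / (2 * K) < y / (2 * K) := by gcongr
    simp only [hφdef]
    linarith
  -- G continuous
  have hGcont : Continuous G := by
    have : G = fun b => ∫ p in (0:ℝ)..b, p * f p := funext hG
    rw [this]
    exact intervalIntegral.continuous_primitive hii 0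
  -- G tends to mbar at top
  have hGt : Tendsto G atTop (nhds mbar) := by
    have h := intervalIntegral_tendsto_integral_Ioi 0 hmean_int tendsto_id
    rw [← hmbar] at h
    exact h.congr fun b => (hG b).symm
  -- φ tends to (T-t)*(lam*mbar) as x → 0⁻
  have hneg_map : Tendsto (fun x : ℝ => -x) (nhdsWithin 0 (Iio 0)) (nhdsWithin 0 (Ioi 0)) := by
    apply tendsto_nhdsWithin_of_tendsto_nhds_of_eventually_within
    · simpa using (continuous_neg.tendsto (0:ℝ)).mono_left nhdsWithin_le_nhds
    · filter_upwards [self_mem_nhdsWithin] with x hx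
      exact neg_pos.2 (mem_Iio.mp hx)
  have hinv : Tendsto (fun x : ℝ => -1 / x) (nhdsWithin 0 (Iio 0)) atTop := by
    have h := tendsto_inv_nhdsGT_zero.comp hneg_map
    refine h.congr fun x => ?_
    simp [Function.comp, inv_neg, neg_div]
  have hφtendsto : Tendsto φ (nhdsWithin 0 (Iio 0)) (nhds ((T - t) * (lam * mbar))) := by
    have h1 : Tendsto (fun x : ℝ => (T - t) * (lam * G (-1 / x)) + x / (2 * K))
        (nhdsWithin 0 (Iio 0)) (nhds ((T - t) * (lam * mbar) + 0 / (2 * K))) := by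
      refine Tendsto.add ?_ ?_
      · exact (tendsto_const_nhds.mul (tendsto_const_nhds.mul (hGt.comp hinv)))
      · exact (tendsto_id.div_const _).mono_left nhdsWithin_le_nhds
    simp only [zero_div, add_zero] at h1
    refine h1.congr' ?_
    filter_upwards [self_mem_nhdsWithin] with x hx
    simp only [hφdef]
    rw [hH'neg x hx]
  -- find c < 0 with S < φ c
  have hS' : S < (T - t) * (lam * mbar) := by nlinarith
  have hev : ∀ᶠ x in nhdsWithin (0:ℝ) (Iio 0), S < φ x :=
    hφtendsto.eventually (eventually_gt_nhds hS')
  obtain ⟨c, hcφ, hc0⟩ := (hev.and self_mem_nhdsWithin).exists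
  -- find a < c with φ a < S
  set a : ℝ := min c (2 * K * (S - (T - t) * (lam * mbar))) - 1 with ha_def
  have hac : a < c := by
    have := min_le_left c (2 * K * (S - (T - t) * (lam * mbar)))
    simp only [ha_def]; linarith
  have ha0 : a < 0 := lt_trans hac hc0
  have haφ : φ a < S := by
    have h1 : H' a ≤ lam * mbar := hH'le a ha0
    have h2 : a < 2 * K * (S - (T - t) * (lam * mbar)) := by
      have := min_le_right c (2 * K * (S - (T - t) * (lam * mbar)))
      simp only [ha_def]; linarith
    have h3 : a / (2 * K) < S - (T - t) * (lam * mbar) := by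
      rw [div_lt_iff₀ h2K]; linarith
    have h4 : (T - t) * H' a ≤ (T - t) * (lam * mbar) :=
      mul_le_mul_of_nonneg_left h1 hD.le
    simp only [hφdef]
    linarith
  -- continuity of φ on [a, c]
  have hφcont : ContinuousOn φ (Icc a c) := by
    have hsub : Icc a c ⊆ {x : ℝ | x < 0} := fun x hx => lt_of_le_of_lt hx.2 hc0
    have h1 : ContinuousOn (fun x : ℝ => (T - t) * (lam * G (-1 / x)) + x / (2 * K))
        (Icc a c) := by
      refine ContinuousOn.add ?_ ?_
      · refine continuousOn_const.mul (continuousOn_const.mul ?_)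
        refine hGcont.comp_continuousOn ?_
        refine ContinuousOn.div continuousOn_const continuousOn_id ?_
        exact fun x hx => ne_of_lt (hsub hx)
      · exact (continuousOn_id.div_const _)
    refine h1.congr fun x hx => ?_
    simp only [hφdef]
    rw [hH'neg x (hsub hx)]
  -- IVT
  obtain ⟨xs, hxs_mem, hxsφ⟩ :
      ∃ xs ∈ Icc a c, φ xs = S := by
    have h := intermediate_value_Icc hac.le hφcont
    have : S ∈ Icc (φ a) (φ c) := ⟨haφ.le, hcφ.le⟩
    obtain ⟨xs, hmem, heq⟩ := h this
    exact ⟨xs, hmem, heq⟩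
  have hxs0 : xs < 0 := lt_of_le_of_lt hxs_mem.2 hc0
  -- uniqueness of root
  have huniq : ∀ y : ℝ, y < 0 → S = (T - t) * H' y + y / (2 * K) → y = xs := by
    intro y hy hyeq
    by_contra hne
    have h2 : (T - t) * H' xs + xs / (2 * K) = S := hxsφ
    rcases lt_or_gt_of_ne hne with h | h
    · have h1 := hφmono y xs h hxs0
      simp only [hφdef] at h1
      linarith
    · have h1 := hφmono xs y h hy
      simp only [hφdef] at h1
      linarith
  -- derivative of g
  set g : ℝ → ℝ := fun x => S * x - (T - t) * H x - x ^ 2 / (4 * K) with hg_def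
  have hgd : ∀ x : ℝ, HasDerivAt g (S - φ x) x := by
    intro x
    have h1 : HasDerivAt (fun x : ℝ => S * x) S x := by
      simpa using (hasDerivAt_id x).const_mul S
    have h2 : HasDerivAt (fun x : ℝ => (T - t) * H x) ((T - t) * H' x) x :=
      (hH'deriv x).const_mul (T - t)
    have h3 : HasDerivAt (fun x : ℝ => x ^ 2 / (4 * K)) (x / (2 * K)) x := by
      have := (hasDerivAt_pow 2 x).div_const (4 * K)
      refine this.congr_deriv ?_
      field_simp
      ring
    have := (h1.sub h2).sub h3
    refine this.congr_deriv ?_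
    simp only [hφdef]
    ring
  have hgcont : Continuous g :=
    continuous_iff_continuousAt.2 fun x => (hgd x).differentiableAt.continuousAt
  have hgderiv : ∀ x : ℝ, deriv g x = S - φ x := fun x => (hgd x).deriv
  -- strict max
  have hmax : ∀ y : ℝ, y ≤ 0 → y ≠ xs → g y < g xs := by
    intro y hy hne
    rcases lt_or_gt_of_ne hne with h | h
    · -- y < xs : g strictly increasing on [y, xs]
      have hmono : StrictMonoOn g (Icc y xs) := by
        refine strictMonoOn_of_deriv_pos (convex_Icc y xs) hgcont.continuousOn ?_
        intro z hz
        rw [interior_Icc] at hz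
        rw [hgderiv z]
        have := hφmono z xs hz.2 hxs0
        rw [hxsφ] at this
        linarith
      exact hmono (left_mem_Icc.2 h.le) (right_mem_Icc.2 h.le) h
    · -- xs < y ≤ 0 : g strictly decreasing on [xs, y]
      have hanti : StrictAntiOn g (Icc xs y) := by
        refine strictAntiOn_of_deriv_neg (convex_Icc xs y) hgcont.continuousOn ?_
        intro z hz
        rw [interior_Icc] at hz
        rw [hgderiv z]
        have hz0 : z < 0 := lt_of_lt_of_le hz.2 hy
        have := hφmono xs z hz.1 hz0
        rw [hxsφ] at this
        linarith
      exact hanti (left_mem_Icc.2 h.le) (right_mem_Icc.2 h.le) h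
  refine ⟨xs, hxs0, ?_, huniq, ?_, ?_⟩
  · simp only [hφdef] at hxsφ; linarith
  · intro y hy
    rcases eq_or_ne y xs with rfl | hne
    · exact le_refl _
    · exact (hmax y hy hne).le
  · intro y hy heq
    by_contra hne
    exact absurd heq (ne_of_lt (hmax y hy hne))
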